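/- Assume R₀ > 1, let n̂ be the stationary age profile, N̂ = ∫₀^∞ n̂(a) da, and let E(T) = ∫₀^∞ exp(−∫₀^a (d(α) + η N̂) dα) da be the expected individual lifespan at the stationary state. Then ∫₀^∞ b(a) n̂(a) da = N̂ / E(T); equivalently, the per-capita rate of births at stationarity equals the inverse of the expected lifespan, so mutants of per-birth probability p are generated at rate p N̂ / E(T). -/

import Mathlib

open MeasureTheory Set

/-- Probability of survival from age `a₁` to age `a₂` in the absence of competition. -/
noncomputable def survival (d : ℝ → ℝ) (a₁ a₂ : ℝ) : ℝ :=
  Real.exp (-(∫ α in a₁..a₂, d α))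

/-- The Euler–Lotka characteristic function `φ(λ) = ∫₀^∞ e^{-λ a} b(a) Π(0,a) da`. -/
noncomputable def eulerLotka (b d : ℝ → ℝ) (lam : ℝ) : ℝ :=
  ∫ a in Ioi (0 : ℝ), Real.exp (-lam * a) * b a * survival d 0 a

/-- The stationary age profile
`n̂(a) = λ₁ e^{-λ₁ a} Π(0,a) / (η ∫₀^∞ e^{-λ₁ α} Π(0,α) dα)`. -/
noncomputable def statProfile (d : ℝ → ℝ) (η lam : ℝ) (a : ℝ) : ℝ :=
  lam * Real.exp (-lam * a) * survival d 0 a /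
    (η * ∫ α in Ioi (0 : ℝ), Real.exp (-lam * α) * survival d 0 α)

lemma survival_pos (d : ℝ → ℝ) (a₁ a₂ : ℝ) : 0 < survival d a₁ a₂ :=
  Real.exp_pos _

lemma survival_cont (d : ℝ → ℝ) (hdcont : Continuous d) :
    Continuous (fun a : ℝ => survival d 0 a) := by
  unfold survival
  exact Real.continuous_exp.comp
    (intervalIntegral.continuous_primitive (fun a b => hdcont.intervalIntegrable a b) 0).neg

/-- At stationarity, the total birth rate equals `N̂ / E(T)`, the population size divided
by the expected individual lifespan `E(T) = ∫₀^∞ exp(-∫₀^a (d(α)+ηN̂) dα) da`; hence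
mutants of per-birth probability `p` are generated at rate `p N̂ / E(T)`. -/
theorem stationary_birth_rate_eq_inverse_lifespan
    (b d : ℝ → ℝ) (bbar dlow η lam : ℝ)
    (hbcont : Continuous b) (hb0 : ∀ a, 0 ≤ b a) (hbbar : ∀ a, b a ≤ bbar)
    (hbbarpos : 0 < bbar)
    (hdcont : Continuous d) (hdlow : ∀ a, 0 ≤ a → dlow ≤ d a) (hdlowpos : 0 < dlow)
    (hη : 0 < η)
    (hR0 : 1 < ∫ a in Ioi (0 : ℝ), b a * survival d 0 a)
    (hlam : 0 < lam) (hroot : eulerLotka b d lam = 1)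
    (Nhat : ℝ) (hNhat : Nhat = ∫ a in Ioi (0 : ℝ), statProfile d η lam a)
    (lifespan : ℝ)
    (hlifespan : lifespan =
      ∫ a in Ioi (0 : ℝ), Real.exp (-(∫ α in (0 : ℝ)..a, (d α + η * Nhat)))) :
    (∫ a in Ioi (0 : ℝ), b a * statProfile d η lam a) = Nhat / lifespan ∧
    (∀ p : ℝ, p * ∫ a in Ioi (0 : ℝ), b a * statProfile d η lam a
      = p * Nhat / lifespan) := by
  obtain ⟨I, hIdef⟩ : ∃ I : ℝ,
      I = ∫ α in Ioi (0 : ℝ), Real.exp (-lam * α) * survival d 0 α := ⟨_, rfl⟩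
  have hfpos : ∀ a : ℝ, 0 < Real.exp (-lam * a) * survival d 0 a :=
    fun a => mul_pos (Real.exp_pos _) (survival_pos d 0 a)
  have hfcont : Continuous (fun a : ℝ => Real.exp (-lam * a) * survival d 0 a) :=
    (Real.continuous_exp.comp (continuous_const.mul continuous_id)).mul
      (survival_cont d hdcont)
  have hfle : ∀ a : ℝ, 0 < a →
      Real.exp (-lam * a) * survival d 0 a ≤ Real.exp (-lam * a) := by
    intro a ha
    have h0 : (0:ℝ) ≤ ∫ α in (0:ℝ)..a, d α :=
      intervalIntegral.integral_nonneg ha.le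
        (fun u hu => le_trans hdlowpos.le (hdlow u hu.1))
    have hs1 : survival d 0 a ≤ 1 := by
      unfold survival
      exact Real.exp_le_one_iff.mpr (neg_nonpos.mpr h0)
    calc Real.exp (-lam * a) * survival d 0 a ≤ Real.exp (-lam * a) * 1 :=
          mul_le_mul_of_nonneg_left hs1 (Real.exp_pos _).le
      _ = Real.exp (-lam * a) := mul_one _
  have hfint : IntegrableOn (fun a : ℝ => Real.exp (-lam * a) * survival d 0 a)
      (Ioi (0:ℝ)) := by
    apply Integrable.mono' (exp_neg_integrableOn_Ioi 0 hlam)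
      hfcont.aestronglyMeasurable.restrict
    filter_upwards [ae_restrict_mem measurableSet_Ioi] with a ha
    rw [Real.norm_eq_abs, abs_of_pos (hfpos a)]
    exact hfle a ha
  have hIpos : 0 < I := by
    rw [hIdef]
    refine (setIntegral_pos_iff_support_of_nonneg_ae ?_ hfint).mpr ?_
    · filter_upwards with a using (hfpos a).le
    · have hsupp : Function.support
          (fun a : ℝ => Real.exp (-lam * a) * survival d 0 a) ∩ Ioi (0:ℝ) = Ioi 0 := by
        ext x; simp [Function.mem_support, (hfpos x).ne', (survival_pos d 0 x).ne']
      rw [hsupp]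
      simp [Real.volume_Ioi]
  have hsp : ∀ a, statProfile d η lam a =
      (lam / (η * I)) * (Real.exp (-lam * a) * survival d 0 a) := by
    intro a
    unfold statProfile
    rw [← hIdef]
    ring
  have hNh : Nhat = lam / η := by
    rw [hNhat]
    simp_rw [hsp]
    rw [MeasureTheory.integral_const_mul, ← hIdef]
    field_simp
  have hηN : η * Nhat = lam := by rw [hNh]; field_simp
  have hL : lifespan = I := by
    rw [hlifespan, hIdef]
    refine setIntegral_congr_fun measurableSet_Ioi (fun a _ => ?_)
    have hsplit : (∫ α in (0:ℝ)..a, (d α + η * Nhat)) =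
        (∫ α in (0:ℝ)..a, d α) + lam * a := by
      rw [intervalIntegral.integral_add (hdcont.intervalIntegrable 0 a)
        intervalIntegrable_const, intervalIntegral.integral_const]
      rw [hηN, smul_eq_mul]; ring
    rw [hsplit]
    unfold survival
    rw [neg_add, Real.exp_add]
    ring_nf
  have hB : (∫ a in Ioi (0:ℝ), b a * statProfile d η lam a) = lam / (η * I) := by
    have hpt : ∀ a, b a * statProfile d η lam a =
        (lam / (η * I)) * (Real.exp (-lam * a) * b a * survival d 0 a) := by
      intro a; rw [hsp]; ring
    simp_rw [hpt]
    rw [MeasureTheory.integral_const_mul]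
    have hEL : (∫ a in Ioi (0:ℝ), Real.exp (-lam * a) * b a * survival d 0 a) = 1 := hroot
    rw [hEL, mul_one]
  constructor
  · rw [hB, hNh, hL, div_div]
  · intro p
    rw [hB, hNh, hL, mul_div_assoc, div_div]
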